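/- Λ(π/4) equals half of Catalan's constant: Λ(π/4) = (1/2)·∑_{k=0}^∞ (-1)^k/(2k+1)². -/

import Mathlib

open Real MeasureTheory Set intervalIntegral

-- log is interval integrable on [0, b] for b > 0 (improper at 0)
lemma intInt_log {b : ℝ} (hb : 0 < b) : IntervalIntegrable Real.log volume 0 b := by
  rw [intervalIntegrable_iff, uIoc_of_le hb.le]
  have hg : IntegrableOn (fun x : ℝ => 2 * x ^ (-(1:ℝ)/2) + |Real.log b|) (Ioc 0 b) := by
    apply Integrable.add
    · exact ((intervalIntegrable_rpow' (by norm_num)).const_mul 2).1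
    · exact integrableOn_const measure_Ioc_lt_top.ne
  refine hg.mono' Real.measurable_log.aestronglyMeasurable ?_
  filter_upwards [ae_restrict_mem measurableSet_Ioc] with x hx
  have hx0 : 0 < x := hx.1
  have hrp : (0:ℝ) ≤ x ^ (-(1:ℝ)/2) := Real.rpow_nonneg hx0.le _
  rcases le_or_gt x 1 with h1 | h1
  · have hneg : Real.log x ≤ 0 := Real.log_nonpos hx0.le h1
    have key : -Real.log x ≤ 2 * x ^ (-(1:ℝ)/2) := by
      have h2 : Real.log (x ^ (-(1:ℝ)/2)) ≤ x ^ (-(1:ℝ)/2) - 1 :=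
        Real.log_le_sub_one_of_pos (Real.rpow_pos_of_pos hx0 _)
      rw [Real.log_rpow hx0] at h2
      nlinarith
    have : ‖Real.log x‖ = -Real.log x := by
      rw [Real.norm_eq_abs, abs_of_nonpos hneg]
    rw [this]
    have := abs_nonneg (Real.log b)
    linarith
  · have hpos : 0 ≤ Real.log x := Real.log_nonneg h1.le
    have hlb : Real.log x ≤ Real.log b := Real.log_le_log hx0 hx.2
    have : ‖Real.log x‖ = Real.log x := by rw [Real.norm_eq_abs, abs_of_nonneg hpos]
    rw [this]
    have := le_abs_self (Real.log b)
    linarith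

-- log (2 sin t) is interval integrable on [0, b] for 0 < b ≤ π/2
lemma intInt_log_two_sin {b : ℝ} (hb : 0 < b) (hb' : b ≤ π / 2) :
    IntervalIntegrable (fun t => Real.log (2 * Real.sin t)) volume 0 b := by
  rw [intervalIntegrable_iff, uIoc_of_le hb.le]
  have hg : IntegrableOn (fun t : ℝ => |Real.log t| + Real.log π) (Ioc 0 b) := by
    apply Integrable.add
    · exact ((intInt_log hb).abs).1
    · exact integrableOn_const measure_Ioc_lt_top.ne
  refine hg.mono' ?_ ?_
  · apply Measurable.aestronglyMeasurable
    exact Real.measurable_log.comp (by fun_prop)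
  filter_upwards [ae_restrict_mem measurableSet_Ioc] with t ht
  have ht0 : 0 < t := ht.1
  have htp : t ≤ π / 2 := ht.2.trans hb'
  have hs_pos : 0 < Real.sin t := Real.sin_pos_of_pos_of_lt_pi ht0 (by linarith [pi_pos])
  have hub : Real.log (2 * Real.sin t) ≤ Real.log (2 * t) := by
    apply Real.log_le_log (by linarith)
    have := Real.sin_le ht0.le
    linarith
  have hlb : Real.log (4 / π * t) ≤ Real.log (2 * Real.sin t) := by
    apply Real.log_le_log (by positivity)
    have := Real.mul_le_sin ht0.le htp
    have hπ := pi_pos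
    rw [div_mul_eq_mul_div, div_le_iff₀ hπ] at *
    nlinarith [Real.mul_le_sin ht0.le htp]
  have e1 : Real.log (2 * t) = Real.log 2 + Real.log t := Real.log_mul two_ne_zero ht0.ne'
  have e2 : Real.log (4 / π * t) = Real.log (4 / π) + Real.log t :=
    Real.log_mul (by positivity) ht0.ne'
  have hπ1 : (1:ℝ) < π := by linarith [pi_gt_three]
  have hlogπ : 0 < Real.log π := Real.log_pos hπ1
  have hlog2 : Real.log 2 ≤ Real.log π := Real.log_le_log two_pos (by linarith [pi_gt_three])
  have h4π : Real.log (4 / π) = Real.log 4 - Real.log π := Real.log_div (by norm_num) pi_pos.ne'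
  have hlog4 : 0 ≤ Real.log 4 := Real.log_nonneg (by norm_num)
  have hN : ‖Real.log (2 * Real.sin t)‖ = |Real.log (2 * Real.sin t)| := rfl
  rw [hN, abs_le]
  constructor
  · have := neg_abs_le (Real.log t)
    have hlog4π : Real.log 4 ≤ 2 * Real.log π := by
      have : Real.log 4 = 2 * Real.log 2 := by
        rw [show (4:ℝ) = 2 ^ 2 by norm_num, Real.log_pow]; push_cast; ring
      linarith
    nlinarith [e2, h4π, hlb, neg_abs_le (Real.log t)]
  · have := le_abs_self (Real.log t)
    linarith [hub, e1]

example : True := trivial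

lemma integral_pow_neg_log (k : ℕ) :
    ∫ x in (0:ℝ)..1, x ^ (2*k) * (-Real.log x) = 1 / (2*(k:ℝ)+1)^2 := by
  set n : ℕ := 2*k+1 with hn
  have hn1 : 1 ≤ n := Nat.le_add_left 1 (2*k)
  have hnR : (0:ℝ) < (n:ℝ) := by positivity
  set F : ℝ → ℝ := fun x => (x ^ n * (1 - (n:ℝ) * Real.log x)) / (n:ℝ)^2 with hF
  have hcont : ContinuousOn F (Icc 0 1) := by
    intro x hx
    rcases eq_or_lt_of_le hx.1 with h0 | h0
    · -- continuity at 0 within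
      have hlim : Filter.Tendsto (fun x : ℝ => x ^ n * Real.log x) (nhdsWithin 0 (Ioi 0)) (nhds 0) := by
        have h1 : Filter.Tendsto (fun x : ℝ => x ^ (n-1)) (nhdsWithin 0 (Ioi 0)) (nhds ((0:ℝ) ^ (n-1))) :=
          ((continuous_pow (n-1)).tendsto 0).mono_left nhdsWithin_le_nhds
        have h2 : Filter.Tendsto (fun x : ℝ => Real.log x * x ^ (1:ℝ)) (nhdsWithin 0 (Ioi 0)) (nhds 0) :=
          tendsto_log_mul_rpow_nhdsGT_zero one_pos
        have h3 := h1.mul h2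
        rw [mul_zero] at h3
        apply h3.congr'
        filter_upwards [self_mem_nhdsWithin] with x (hx : 0 < x)
        rw [Real.rpow_one]
        have : x ^ n = x ^ (n-1) * x := by
          conv_lhs => rw [show n = (n-1)+1 by omega]
          ring
        rw [this]; ring
      have hlim2 : Filter.Tendsto F (nhdsWithin 0 (Ioi 0)) (nhds 0) := by
        have hpow : Filter.Tendsto (fun x : ℝ => x ^ n) (nhdsWithin 0 (Ioi 0)) (nhds 0) := by
          have := ((continuous_pow n).tendsto 0).mono_left (nhdsWithin_le_nhds (s := Ioi (0:ℝ)))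
          simpa [zero_pow (by omega : n ≠ 0)] using this
        have : Filter.Tendsto (fun x : ℝ => (x ^ n - (n:ℝ) * (x ^ n * Real.log x)) / (n:ℝ)^2)
            (nhdsWithin 0 (Ioi 0)) (nhds ((0 - (n:ℝ) * 0) / (n:ℝ)^2)) :=
          ((hpow.sub (hlim.const_mul _))).div_const _
        simp only [mul_zero, sub_zero, zero_div, zero_sub, neg_zero] at this
        apply this.congr
        intro x; simp only [hF]; ring
      rw [← h0]
      have hF0 : F 0 = 0 := by simp [hF, zero_pow (by omega : n ≠ 0)]
      rw [← continuousWithinAt_diff_self, ContinuousWithinAt, hF0]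
      refine Filter.Tendsto.mono_left hlim2 (nhdsWithin_mono _ ?_)
      intro y hy
      rcases hy with ⟨⟨h1, _⟩, h2⟩
      exact lt_of_le_of_ne h1 (Ne.symm (by simpa using h2))
    · exact ((continuousAt_id.pow n).mul
        ((continuousAt_const.sub (continuousAt_const.mul (Real.continuousAt_log h0.ne'))))).div_const _ |>.continuousWithinAt
  have hderiv : ∀ x ∈ Ioo (0:ℝ) 1, HasDerivAt F (x ^ (2*k) * (-Real.log x)) x := by
    intro x hx
    have hx0 : 0 < x := hx.1
    have h1 : HasDerivAt (fun x : ℝ => x ^ n) ((n:ℝ) * x ^ (n-1)) x := hasDerivAt_pow n x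
    have h2 : HasDerivAt (fun x : ℝ => 1 - (n:ℝ) * Real.log x) (-((n:ℝ) * x⁻¹)) x :=
      ((Real.hasDerivAt_log hx0.ne').const_mul (n:ℝ)).const_sub 1
    have h3 := (h1.mul h2).div_const ((n:ℝ)^2)
    convert h3 using 1
    case e'_4 => rfl
    case e'_5 => rfl
    case e'_8 => rfl
    have hnsub : n - 1 = 2*k := by omega
    rw [hnsub]
    have hxn : x ^ n = x ^ (2*k) * x := pow_succ x (2*k)
    field_simp
    rw [hxn]
    ring
  have hint : IntervalIntegrable (fun x : ℝ => x ^ (2*k) * (-Real.log x)) volume 0 1 := by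
    exact ((intInt_log one_pos).neg).continuousOn_mul (continuous_pow (2*k)).continuousOn
  have := intervalIntegral.integral_eq_sub_of_hasDeriv_right_of_le zero_le_one hcont
    (fun x hx => (hderiv x hx).hasDerivWithinAt) hint
  rw [this]
  have hF1 : F 1 = 1 / (n:ℝ)^2 := by simp [hF]
  have hF0 : F 0 = 0 := by simp [hF, zero_pow (by omega : n ≠ 0)]
  rw [hF1, hF0, sub_zero]
  congr 2
  push_cast [hn]
  ring

lemma integral_neg_log_div :
    ∫ x in (0:ℝ)..1, (-Real.log x) / (1 + x^2) = ∑' k : ℕ, (-1:ℝ)^k / (2*(k:ℝ)+1)^2 := by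
  have base : ∀ k : ℕ, ∫ x in Ioo (0:ℝ) 1, x ^ (2*k) * (-Real.log x) = 1/(2*(k:ℝ)+1)^2 := by
    intro k
    rw [← MeasureTheory.integral_Ioc_eq_integral_Ioo,
      ← intervalIntegral.integral_of_le zero_le_one]
    exact integral_pow_neg_log k
  set F : ℕ → ℝ → ℝ := fun k x => (-1:ℝ)^k * (x ^ (2*k) * (-Real.log x)) with hFdef
  have hmeas : MeasurableSet (Ioo (0:ℝ) 1) := measurableSet_Ioo
  have hFint : ∀ k, Integrable (F k) (volume.restrict (Ioo (0:ℝ) 1)) := by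
    intro k
    have h1 : IntervalIntegrable (fun x : ℝ => x ^ (2*k) * (-Real.log x)) volume 0 1 :=
      ((intInt_log one_pos).neg).continuousOn_mul (continuous_pow (2*k)).continuousOn
    have h2 : IntegrableOn (fun x : ℝ => x ^ (2*k) * (-Real.log x)) (Ioo 0 1) volume :=
      (h1.1).mono_set Ioo_subset_Ioc_self
    exact h2.const_mul _
  have hnorm : ∀ k : ℕ, ∫ x in Ioo (0:ℝ) 1, ‖F k x‖ = 1/(2*(k:ℝ)+1)^2 := by
    intro k
    rw [← base k]
    apply setIntegral_congr_fun hmeas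
    intro x hx
    have hl : 0 ≤ -Real.log x := by
      have := Real.log_nonpos hx.1.le hx.2.le; linarith
    simp only [hFdef, Real.norm_eq_abs, abs_mul, abs_pow, abs_neg, abs_one, one_pow, one_mul,
      abs_of_pos hx.1, abs_of_nonneg hl]
  have hsum : Summable fun k : ℕ => ∫ x in Ioo (0:ℝ) 1, ‖F k x‖ := by
    rw [funext hnorm]
    have h1 : Summable (fun n : ℕ => 1 / ((n:ℝ)+1) ^ 2) := by
      have := (summable_one_div_nat_pow (p := 2)).2 (by norm_num)
      have h2 := (summable_nat_add_iff 1).2 this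
      exact h2.congr (by intro n; push_cast; ring_nf)
    refine Summable.of_nonneg_of_le (fun k => by positivity) (fun k => ?_) h1
    apply one_div_le_one_div_of_le (by positivity)
    have : ((k:ℝ)+1) ≤ 2*(k:ℝ)+1 := by linarith [Nat.cast_nonneg (α := ℝ) k]
    nlinarith [Nat.cast_nonneg (α := ℝ) k]
  have hswap := MeasureTheory.integral_tsum_of_summable_integral_norm hFint hsum
  have hpt : ∀ x ∈ Ioo (0:ℝ) 1, (∑' k, F k x) = (-Real.log x) / (1 + x^2) := by
    intro x hx
    have hr : ‖-(x^2)‖ < 1 := by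
      rw [norm_neg, Real.norm_eq_abs, abs_of_nonneg (by positivity)]
      nlinarith [hx.1, hx.2]
    have hgeom := tsum_geometric_of_norm_lt_one hr
    have he : ∀ k : ℕ, F k x = (-(x^2))^k * (-Real.log x) := by
      intro k
      simp only [hFdef]
      rw [neg_pow, pow_mul]
      ring
    calc (∑' k, F k x) = ∑' k : ℕ, (-(x^2))^k * (-Real.log x) := by rw [funext he]
      _ = (∑' k : ℕ, (-(x^2))^k) * (-Real.log x) := tsum_mul_right
      _ = (1 - -(x^2))⁻¹ * (-Real.log x) := by rw [hgeom]
      _ = (-Real.log x) / (1 + x^2) := by rw [sub_neg_eq_add]; ring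
  rw [intervalIntegral.integral_of_le zero_le_one, MeasureTheory.integral_Ioc_eq_integral_Ioo]
  have : ∫ x in Ioo (0:ℝ) 1, (-Real.log x) / (1 + x^2) = ∫ x in Ioo (0:ℝ) 1, ∑' k, F k x :=
    (setIntegral_congr_fun hmeas hpt).symm
  rw [this, ← hswap]
  congr 1
  funext k
  rw [MeasureTheory.integral_const_mul, base k, mul_one_div]

lemma subst_arctan :
    ∫ t in (0:ℝ)..(π/4), -Real.log (Real.tan t)
      = ∫ x in (0:ℝ)..1, (-Real.log x) / (1 + x^2) := by
  have himg : Real.arctan '' Ioo 0 1 = Ioo 0 (π/4) := by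
    apply Subset.antisymm
    · rintro _ ⟨x, hx, rfl⟩
      constructor
      · have := Real.arctan_strictMono hx.1
        simpa using this
      · have := Real.arctan_strictMono hx.2
        rwa [Real.arctan_one] at this
    · intro y hy
      have hπ := Real.pi_pos
      have hy2 : y < π/2 := by nlinarith [hy.2]
      have hy1 : -(π/2) < y := by nlinarith [hy.1]
      refine ⟨Real.tan y, ⟨?_, ?_⟩, Real.arctan_tan hy1 hy2⟩
      · exact Real.tan_pos_of_pos_of_lt_pi_div_two hy.1 hy2
      · have := Real.strictMonoOn_tan ⟨hy1, hy2⟩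
          ⟨by nlinarith, by nlinarith⟩ hy.2
        rwa [Real.tan_pi_div_four] at this
  have key := MeasureTheory.integral_image_eq_integral_abs_deriv_smul (s := Ioo (0:ℝ) 1) measurableSet_Ioo
    (fun x _ => (Real.hasDerivAt_arctan x).hasDerivWithinAt)
    (Real.arctan_injective.injOn) (fun t => -Real.log (Real.tan t))
  rw [himg] at key
  rw [intervalIntegral.integral_of_le (by positivity : (0:ℝ) ≤ π/4),
    MeasureTheory.integral_Ioc_eq_integral_Ioo,
    intervalIntegral.integral_of_le zero_le_one,
    MeasureTheory.integral_Ioc_eq_integral_Ioo, key]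
  apply setIntegral_congr_fun measurableSet_Ioo
  intro x hx
  simp only [Real.tan_arctan, smul_eq_mul, abs_of_nonneg (show (0:ℝ) ≤ 1/(1+x^2) by positivity)]
  ring

noncomputable def Λ (θ : ℝ) : ℝ := -∫ t in (0:ℝ)..θ, Real.log |2 * Real.sin t|

theorem lobachevsky_pi_div_four :
    Λ (π / 4) = (1 / 2) * ∑' k : ℕ, (-1 : ℝ) ^ k / (2 * k + 1) ^ 2 := by
  have hπ := Real.pi_pos
  set A := ∫ t in (0:ℝ)..(π/4), Real.log (2 * Real.sin t) with hA
  set B := ∫ t in (0:ℝ)..(π/4), Real.log (2 * Real.cos t) with hB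
  have hfA : IntervalIntegrable (fun t => Real.log (2 * Real.sin t)) volume 0 (π/4) :=
    intInt_log_two_sin (by positivity) (by linarith)
  have hfhalf : IntervalIntegrable (fun t => Real.log (2 * Real.sin t)) volume 0 (π/2) :=
    intInt_log_two_sin (by positivity) le_rfl
  have hfmid : IntervalIntegrable (fun t => Real.log (2 * Real.sin t)) volume (π/4) (π/2) := by
    apply hfhalf.mono_set
    rw [uIcc_of_le (by linarith), uIcc_of_le (by linarith)]
    exact Icc_subset_Icc (by linarith) le_rfl
  have hgB : IntervalIntegrable (fun t => Real.log (2 * Real.cos t)) volume 0 (π/4) := by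
    apply ContinuousOn.intervalIntegrable
    apply ContinuousOn.log (by fun_prop)
    intro t ht
    rw [uIcc_of_le (by positivity)] at ht
    have : 0 < Real.cos t := Real.cos_pos_of_mem_Ioo ⟨by linarith [ht.1], by linarith [ht.2]⟩
    positivity
  have hΛ : Λ (π/4) = -A := by
    rw [Λ, hA]
    congr 1
    apply intervalIntegral.integral_congr
    intro t ht
    rw [uIcc_of_le (by positivity)] at ht
    have hs : 0 ≤ Real.sin t := Real.sin_nonneg_of_nonneg_of_le_pi ht.1 (by linarith [ht.2])
    simp only [abs_of_nonneg (by linarith : (0:ℝ) ≤ 2 * Real.sin t)]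
  have hdbl : (∫ t in (0:ℝ)..(π/4), Real.log (2 * Real.sin (2*t)))
      = 2⁻¹ * ∫ u in (0:ℝ)..(π/2), Real.log (2 * Real.sin u) := by
    have h := intervalIntegral.integral_comp_mul_left (a := 0) (b := π/4)
      (fun u => Real.log (2 * Real.sin u)) (c := 2) two_ne_zero
    rw [show (2:ℝ)*0 = 0 by ring, show (2:ℝ)*(π/4) = π/2 by ring, smul_eq_mul] at h
    exact h
  have hprod : (∫ t in (0:ℝ)..(π/4), Real.log (2 * Real.sin (2*t))) = A + B := by
    rw [hA, hB, ← intervalIntegral.integral_add hfA hgB]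
    apply intervalIntegral.integral_congr_ae
    filter_upwards with t ht
    rw [uIoc_of_le (by positivity)] at ht
    have hs : 0 < Real.sin t := Real.sin_pos_of_pos_of_lt_pi ht.1 (by linarith [ht.2])
    have hc : 0 < Real.cos t := Real.cos_pos_of_mem_Ioo ⟨by linarith [ht.1], by linarith [ht.2]⟩
    rw [Real.sin_two_mul,
      show 2*(2*Real.sin t*Real.cos t) = (2*Real.sin t)*(2*Real.cos t) by ring,
      Real.log_mul (by positivity) (by positivity)]
  have hsplit := intervalIntegral.integral_add_adjacent_intervals hfA hfmid
  have hrefl : (∫ u in (π/4:ℝ)..(π/2), Real.log (2 * Real.sin u)) = B := by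
    have h := intervalIntegral.integral_comp_sub_left (a := 0) (b := π/4)
      (fun u => Real.log (2 * Real.sin u)) (π/2)
    rw [show π/2 - π/4 = π/4 by ring, sub_zero] at h
    rw [← h, hB]
    apply intervalIntegral.integral_congr
    intro t ht
    simp [Real.sin_pi_div_two_sub]
  have hzero : A + B = 0 := by
    have h1 : A + B = 2⁻¹ * (A + B) := by
      calc A + B = ∫ t in (0:ℝ)..(π/4), Real.log (2 * Real.sin (2*t)) := hprod.symm
        _ = 2⁻¹ * ∫ u in (0:ℝ)..(π/2), Real.log (2 * Real.sin u) := hdbl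
        _ = 2⁻¹ * (A + ∫ u in (π/4:ℝ)..(π/2), Real.log (2 * Real.sin u)) := by rw [← hsplit]
        _ = 2⁻¹ * (A + B) := by rw [hrefl]
    linarith
  have hBA : B - A = ∑' k : ℕ, (-1:ℝ)^k / (2*(k:ℝ)+1)^2 := by
    rw [hA, hB, ← intervalIntegral.integral_sub hgB hfA,
      ← integral_neg_log_div, ← subst_arctan]
    apply intervalIntegral.integral_congr_ae
    filter_upwards with t ht
    rw [uIoc_of_le (by positivity)] at ht
    have hs : 0 < Real.sin t := Real.sin_pos_of_pos_of_lt_pi ht.1 (by linarith [ht.2])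
    have hc : 0 < Real.cos t := Real.cos_pos_of_mem_Ioo ⟨by linarith [ht.1], by linarith [ht.2]⟩
    rw [Real.log_mul two_ne_zero hs.ne', Real.log_mul two_ne_zero hc.ne',
      Real.tan_eq_sin_div_cos, Real.log_div hs.ne' hc.ne']
    ring
  rw [hΛ]
  linarith [hzero, hBA]
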